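/- For any word u over a finite alphabet and any letter a, r(u, a) ≤ ρ(u). -/

import Mathlib

variable {A : Type*}

/-- Simon's congruence of order `k`: `u` and `v` have the same subwords of length ≤ k. -/
def SimonCong (k : ℕ) (u v : List A) : Prop :=
  ∀ s : List A, s.length ≤ k → (s.Sublist u ↔ s.Sublist v)

/-- Subword distance `δ(u,v) = sup {k | u ∼ₖ v} ∈ ℕ∞`. -/
noncomputable def sdelta (u v : List A) : ℕ∞ :=
  sSup {d : ℕ∞ | ∃ k : ℕ, d = k ∧ SimonCong k u v}

/-- Right side distance `r(u,t) = δ(u, u·t)`. -/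
noncomputable def rdist (u t : List A) : ℕ∞ := sdelta u (u ++ t)

/-- Left side distance `ℓ(t,u) = δ(t·u, u)`. -/
noncomputable def ldist (t u : List A) : ℕ∞ := sdelta (t ++ u) u

/-- Piecewise complexity `h(u)`: least `n` such that any `v` with `u ∼ₙ v` equals `u`. -/
noncomputable def pcHeight (u : List A) : ℕ :=
  sInf {n : ℕ | ∀ v : List A, SimonCong n u v → v = u}

/-- `u` is `m`-reduced: no strict subword of `u` is `∼ₘ`-equivalent to `u`. -/
def Reduced (m : ℕ) (u : List A) : Prop :=
  ∀ u' : List A, u'.Sublist u → u' ≠ u → ¬ SimonCong m u u'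

/-- Piecewise minimality index `ρ(u)`: least `m` such that `u` is `m`-reduced. -/
noncomputable def pcRho (u : List A) : ℕ := sInf {m : ℕ | Reduced m u}

/-- An `A`-arch: contains every letter of `A` but no strict prefix does. -/
def IsArch (A : Type*) [Fintype A] (s : List A) : Prop :=
  (∀ a : A, a ∈ s) ∧ ∀ t : List A, t <+: s → t ≠ s → ∃ a : A, a ∉ t

/-- The infinite periodic word `u^ω`. -/
def omegaWord (u : List A) (hu : u ≠ []) (i : ℕ) : A :=
  u.get ⟨i % u.length, Nat.mod_lt i (List.length_pos_iff.mpr hu)⟩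

/-- The arch-jumping function `α` on `u^ω`: `α(i)` is the least `j > i` such that
every letter of `A` occurs among positions `i, …, j-1` of `u^ω`. -/
noncomputable def archJump (u : List A) (hu : u ≠ []) (i : ℕ) : ℕ :=
  sInf {j : ℕ | i < j ∧ ∀ a : A, ∃ m : ℕ, i ≤ m ∧ m < j ∧ omegaWord u hu m = a}

/-- `p` is an arch-period of `u` starting at `i`. -/
def IsArchPeriodAt (u : List A) (hu : u ≠ []) (i p : ℕ) : Prop :=
  0 < p ∧ ∃ k : ℕ, (archJump u hu)^[k + p] i ≡ (archJump u hu)^[k] i [MOD u.length]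

/-- The arch-period of `u`: the least arch-period starting at 0. -/
noncomputable def archPeriod (u : List A) (hu : u ≠ []) : ℕ :=
  sInf {p : ℕ | IsArchPeriodAt u hu 0 p}

/-- `K_u`: the least `k` with `α^{k+p}(0) ≡ α^k(0) (mod L)`. -/
noncomputable def archTransientIndex (u : List A) (hu : u ≠ []) : ℕ :=
  sInf {k : ℕ |
    (archJump u hu)^[k + archPeriod u hu] 0 ≡ (archJump u hu)^[k] 0 [MOD u.length]}

/-- The transient `T_u = α^{K_u}(0)`. -/
noncomputable def archTransient (u : List A) (hu : u ≠ []) : ℕ :=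
  (archJump u hu)^[archTransientIndex u hu] 0

/-- The span `Δ_u = α^{K_u+p_u}(0) − α^{K_u}(0)`. -/
noncomputable def archSpan (u : List A) (hu : u ≠ []) : ℕ :=
  (archJump u hu)^[archTransientIndex u hu + archPeriod u hu] 0 - archTransient u hu

/-- `u^n`: the `n`-fold concatenation of `u`. -/
def listPow (u : List A) (n : ℕ) : List A := (List.replicate n u).flatten

section Aux
open List
variable {A : Type*}

lemma simonCong_mono {k k' : ℕ} {u v : List A} (h : k' ≤ k) (hc : SimonCong k u v) :
    SimonCong k' u v := fun s hs => hc s (hs.trans h)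

lemma reduced_mono {m m' : ℕ} {u : List A} (h : m ≤ m') (hr : Reduced m u) :
    Reduced m' u := fun u' hsub hne hc => hr u' hsub hne (simonCong_mono h hc)

lemma reduced_length (u : List A) : Reduced u.length u := by
  intro u' hsub hne hc
  exact hne (hsub.antisymm ((hc u le_rfl).mp (List.Sublist.refl u)))

lemma exists_split_last {a : A} {u : List A} (h : a ∈ u) :
    ∃ x y, u = x ++ a :: y ∧ a ∉ y := by
  induction u with
  | nil => simp at h
  | cons b v ih =>
    by_cases hv : a ∈ v
    · obtain ⟨x, y, rfl, hy⟩ := ih hv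
      exact ⟨b :: x, y, rfl, hy⟩
    · rcases List.mem_cons.mp h with rfl | h'
      · exact ⟨[], v, rfl, hv⟩
      · exact absurd h' hv

lemma snoc_sublist_left {a : A} {l w1 w2 : List A} (h : (l ++ [a]) <+ (w1 ++ w2))
    (ha : a ∉ w2) : (l ++ [a]) <+ w1 := by
  rw [List.sublist_append_iff] at h
  obtain ⟨t1, t2, heq, h1, h2⟩ := h
  rcases List.eq_nil_or_concat t2 with rfl | ⟨t2', b, rfl⟩
  · rw [List.append_nil] at heq; rwa [← heq] at h1
  · exfalso
    have hba : b = a := by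
      have := congrArg List.getLast? heq
      rw [List.concat_eq_append, ← List.append_assoc, List.getLast?_concat,
        List.getLast?_concat] at this
      exact (Option.some_injective _ this).symm
    subst hba
    exact ha (h2.mem (by simp))

lemma key_lemma {a : A} {u : List A} {k : ℕ} (hk : 0 < k)
    (hc : SimonCong k u (u ++ [a])) : ¬ Reduced (k - 1) u := by
  have ha : a ∈ u := by
    have := (hc [a] (by simp only [List.length_singleton]; omega)).mpr (by simp)
    simpa using this
  obtain ⟨x, y, rfl, hy⟩ := exists_split_last ha
  have hxy : (x ++ y) <+ (x ++ a :: y) :=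
    (List.append_sublist_append_left x).mpr (List.sublist_cons_self a y)
  intro hred
  refine hred (x ++ y) hxy ?_ ?_
  · intro heq
    have := congrArg List.length heq
    simp at this
  · intro s hs
    constructor
    · intro hsu
      have h1 : (s ++ [a]) <+ ((x ++ a :: y) ++ [a]) :=
        (List.append_sublist_append_right _).mpr hsu
      have h2 : (s ++ [a]) <+ (x ++ a :: y) :=
        (hc (s ++ [a]) (by simp; omega)).mpr h1
      have h3 : (s ++ [a]) <+ ((x ++ [a]) ++ y) := by simpa using h2
      have h5 : s <+ x := (List.append_sublist_append_right _).mp (snoc_sublist_left h3 hy)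
      exact h5.trans (List.sublist_append_left x y)
    · intro hsu
      exact hsu.trans hxy

lemma key_le_rho {a : A} {u : List A} {k : ℕ} (hc : SimonCong k u (u ++ [a])) :
    k ≤ pcRho u := by
  rcases Nat.eq_zero_or_pos k with rfl | hk
  · exact Nat.zero_le _
  · have hne : {m : ℕ | Reduced m u}.Nonempty := ⟨u.length, reduced_length u⟩
    refine le_csInf hne fun m hm => ?_
    by_contra hlt
    push_neg at hlt
    exact key_lemma hk hc (reduced_mono (by omega) hm)

end Aux

/-- `r(u, a) ≤ ρ(u)`. -/
theorem stmt12 {A : Type*} [Fintype A] (u : List A) (a : A) :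
    rdist u [a] ≤ (pcRho u : ℕ∞) := by
  unfold rdist sdelta
  apply sSup_le
  rintro d ⟨k, rfl, hc⟩
  exact_mod_cast key_le_rho hc
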